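/- arXiv:1402.7342 — 4 statements merged into one kernel-verified Lean document; each statement's English description precedes it below -/
import Mathlib

section
/- For all c, c' ∈ F, one has 2 · |c·c'|_X ≤ L_{YX}(c) · L_{XY}(c'). -/
/-- The word length of `g` with respect to `S ∪ S⁻¹`. -/
noncomputable def wordLength {G : Type*} [Group G] (S : Set G) (g : G) : ℕ :=
  sInf {m : ℕ | ∃ f : Fin m → G, (∀ i, f i ∈ S ∨ (f i)⁻¹ ∈ S) ∧ g = (List.ofFn f).prod}

/-- `X : ι → G` indexes a free basis of the group `G`. -/
def IsFreeBasis {G : Type*} [Group G] {ι : Type*} (X : ι → G) : Prop :=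
  Function.Bijective (FreeGroup.lift X : FreeGroup ι →* G)

namespace DispAux

variable {G : Type*} [Group G]

/-- `g` has a representation as a product of letters from `S ∪ S⁻¹`. -/
def HasRep (S : Set G) (g : G) : Prop :=
  ∃ L : List G, (∀ z ∈ L, z ∈ S ∨ z⁻¹ ∈ S) ∧ g = L.prod

lemma mem_set_of_list (S : Set G) (g : G) (L : List G)
    (hL : ∀ z ∈ L, z ∈ S ∨ z⁻¹ ∈ S) (hg : g = L.prod) :
    L.length ∈ {m : ℕ | ∃ f : Fin m → G,
      (∀ i, f i ∈ S ∨ (f i)⁻¹ ∈ S) ∧ g = (List.ofFn f).prod} := by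
  refine ⟨L.get, fun i => hL _ (List.get_mem L i), ?_⟩
  rw [List.ofFn_get]; exact hg

lemma wordLength_le_of_list (S : Set G) (g : G) (L : List G)
    (hL : ∀ z ∈ L, z ∈ S ∨ z⁻¹ ∈ S) (hg : g = L.prod) :
    wordLength S g ≤ L.length :=
  Nat.sInf_le (mem_set_of_list S g L hL hg)

lemma exists_min_list (S : Set G) (g : G) (h : HasRep S g) :
    ∃ L : List G, (∀ z ∈ L, z ∈ S ∨ z⁻¹ ∈ S) ∧ g = L.prod ∧
      L.length = wordLength S g := by
  obtain ⟨L₀, hL₀, hg₀⟩ := h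
  have hne : {m : ℕ | ∃ f : Fin m → G,
      (∀ i, f i ∈ S ∨ (f i)⁻¹ ∈ S) ∧ g = (List.ofFn f).prod}.Nonempty :=
    ⟨L₀.length, mem_set_of_list S g L₀ hL₀ hg₀⟩
  obtain ⟨f, hf, hprod⟩ := Nat.sInf_mem hne
  refine ⟨List.ofFn f, ?_, hprod, by simp [wordLength]⟩
  intro z hz
  obtain ⟨i, rfl⟩ := List.mem_ofFn.mp hz
  exact hf i

lemma hasRep_inv {S : Set G} {g : G} (h : HasRep S g) : HasRep S g⁻¹ := by
  obtain ⟨L, hL, rfl⟩ := h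
  refine ⟨(L.map fun x => x⁻¹).reverse, ?_, List.prod_inv_reverse L⟩
  intro z hz
  rw [List.mem_reverse, List.mem_map] at hz
  obtain ⟨x, hx, rfl⟩ := hz
  rcases hL x hx with h | h
  · right; simpa using h
  · left; exact h

lemma hasRep_mul {S : Set G} {g h : G} (hg : HasRep S g) (hh : HasRep S h) :
    HasRep S (g * h) := by
  obtain ⟨L, hL, rfl⟩ := hg
  obtain ⟨M, hM, rfl⟩ := hh
  refine ⟨L ++ M, ?_, (List.prod_append).symm⟩
  intro z hz
  rcases List.mem_append.mp hz with h | h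
  · exact hL z h
  · exact hM z h

lemma hasRep_all {ι : Type*} (X : ι → G)
    (hX : Function.Surjective (FreeGroup.lift X : FreeGroup ι →* G)) (g : G) :
    HasRep (Set.range X) g := by
  obtain ⟨w, rfl⟩ := hX g
  induction w using FreeGroup.induction_on with
  | C1 => exact ⟨[], by simp, by simp⟩
  | of i =>
    have h : (FreeGroup.lift X) (pure i) = X i := FreeGroup.lift_apply_of
    exact ⟨[X i], by simp, by simp [h]⟩
  | inv_of i _ =>
    have h : (FreeGroup.lift X) (pure i) = X i := FreeGroup.lift_apply_of
    have h2 : HasRep (Set.range X) ((FreeGroup.lift X) (pure i)) :=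
      ⟨[X i], by simp, by simp [h]⟩
    have h3 := hasRep_inv h2
    rwa [← map_inv] at h3
  | mul x y hx hy =>
    have := hasRep_mul hx hy
    simpa using this

lemma wordLength_mul_le (S : Set G) (g h : G) (hg : HasRep S g) (hh : HasRep S h) :
    wordLength S (g * h) ≤ wordLength S g + wordLength S h := by
  obtain ⟨L, hL, rfl, hLlen⟩ := exists_min_list S g hg
  obtain ⟨M, hM, rfl, hMlen⟩ := exists_min_list S h hh
  calc wordLength S (L.prod * M.prod) ≤ (L ++ M).length :=
        wordLength_le_of_list S _ (L ++ M)
          (fun z hz => (List.mem_append.mp hz).elim (hL z) (hM z))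
          (List.prod_append).symm
    _ = _ := by rw [List.length_append, hLlen, hMlen]

lemma wordLength_inv_le (S : Set G) (g : G) (hg : HasRep S g) :
    wordLength S g⁻¹ ≤ wordLength S g := by
  obtain ⟨L, hL, rfl, hLlen⟩ := exists_min_list S g hg
  calc wordLength S L.prod⁻¹ ≤ ((L.map fun x => x⁻¹).reverse).length := by
        refine wordLength_le_of_list S _ _ ?_ (List.prod_inv_reverse L)
        intro z hz
        rw [List.mem_reverse, List.mem_map] at hz
        obtain ⟨x, hx, rfl⟩ := hz
        rcases hL x hx with h | h
        · right; simpa using h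
        · left; exact h
    _ = L.length := by simp
    _ = _ := hLlen

lemma wordLength_list_prod_le (S : Set G) (B : ℕ) (hRep : ∀ g : G, HasRep S g) :
    ∀ L : List G, (∀ z ∈ L, wordLength S z ≤ B) →
      wordLength S L.prod ≤ L.length * B := by
  intro L
  induction L with
  | nil =>
    intro _
    simp only [List.prod_nil, List.length_nil, Nat.zero_mul, Nat.le_zero]
    have : wordLength S (1 : G) ≤ ([] : List G).length :=
      wordLength_le_of_list S 1 [] (by simp) (by simp)
    simpa using this
  | cons a L ih =>
    intro hz
    calc wordLength S (a :: L).prod = wordLength S (a * L.prod) := by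
          rw [List.prod_cons]
      _ ≤ wordLength S a + wordLength S L.prod :=
          wordLength_mul_le S _ _ (hRep a) (hRep L.prod)
      _ ≤ B + L.length * B := by
          exact Nat.add_le_add (hz a (by simp)) (ih fun z h => hz z (by simp [h]))
      _ = (a :: L).length * B := by
          rw [List.length_cons]; ring

lemma map_conj_prod (a : G) : ∀ L : List G,
    (L.map fun z => a * z * a⁻¹).prod = a * L.prod * a⁻¹ := by
  intro L
  induction L with
  | nil => simp
  | cons x L ih =>
    rw [List.map_cons, List.prod_cons, List.prod_cons, ih]
    group

/-! ### Word length with respect to a free basis equals the free-group norm -/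

lemma wordLength_lift_le_norm {ι : Type*} [DecidableEq ι] (X : ι → G) (w : FreeGroup ι) :
    wordLength (Set.range X) (FreeGroup.lift X w) ≤ w.norm := by
  have hlen : (w.toWord.map fun p => cond p.2 (X p.1) (X p.1)⁻¹).length = w.norm := by
    simp [FreeGroup.norm]
  rw [← hlen]
  refine wordLength_le_of_list _ _ _ ?_ ?_
  · intro z hz
    rw [List.mem_map] at hz
    obtain ⟨p, _, rfl⟩ := hz
    cases p.2
    · right; simp
    · left; simp
  · conv_lhs => rw [← FreeGroup.mk_toWord (x := w)]
    rw [FreeGroup.lift_mk]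

lemma exists_preimage_of_list {ι : Type*} [DecidableEq ι] (X : ι → G) :
    ∀ L : List G, (∀ z ∈ L, z ∈ Set.range X ∨ z⁻¹ ∈ Set.range X) →
      ∃ v : FreeGroup ι, FreeGroup.lift X v = L.prod ∧ v.norm ≤ L.length := by
  intro L
  induction L with
  | nil => exact fun _ => ⟨1, by simp, by simp⟩
  | cons a L ih =>
    intro hz
    obtain ⟨v, hv, hvn⟩ := ih fun z h => hz z (by simp [h])
    rcases hz a (by simp) with ⟨i, hi⟩ | ⟨i, hi⟩
    · refine ⟨FreeGroup.of i * v, by simp [hv, hi], ?_⟩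
      calc (FreeGroup.of i * v).norm ≤ (FreeGroup.of i).norm + v.norm :=
            FreeGroup.norm_mul_le _ _
        _ ≤ 1 + L.length := by
            rw [FreeGroup.norm_of]; exact Nat.add_le_add_left hvn 1
        _ = (a :: L).length := by simp [Nat.add_comm]
    · refine ⟨(FreeGroup.of i)⁻¹ * v, ?_, ?_⟩
      · simp only [map_mul, map_inv, FreeGroup.lift_apply_of, hi, hv, List.prod_cons, inv_inv]
      · calc ((FreeGroup.of i)⁻¹ * v).norm ≤ (FreeGroup.of i)⁻¹.norm + v.norm :=
              FreeGroup.norm_mul_le _ _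
          _ ≤ 1 + L.length := by
              rw [FreeGroup.norm_inv_eq, FreeGroup.norm_of]
              exact Nat.add_le_add_left hvn 1
          _ = (a :: L).length := by simp [Nat.add_comm]

lemma wordLength_lift_eq_norm {ι : Type*} [DecidableEq ι] (X : ι → G)
    (hX : Function.Bijective (FreeGroup.lift X : FreeGroup ι →* G))
    (w : FreeGroup ι) :
    wordLength (Set.range X) (FreeGroup.lift X w) = w.norm := by
  refine le_antisymm (wordLength_lift_le_norm X w) ?_
  obtain ⟨L, hL, hprod, hlen⟩ :=
    exists_min_list (Set.range X) (FreeGroup.lift X w)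
      (hasRep_all X hX.2 _)
  obtain ⟨v, hv, hvn⟩ := exists_preimage_of_list X L hL
  have : v = w := hX.1 (by rw [hv, hprod])
  rw [← hlen, ← this]
  exact hvn

/-! ### Reduced words and the key no-cancellation lemma -/

/-- No-cancellation relation between adjacent letters. -/
def R {α : Type*} (a b : α × Bool) : Prop := ¬(a.1 = b.1 ∧ a.2 = !b.2)

lemma reduce_eq_self_of_chain' {α : Type*} [DecidableEq α] :
    ∀ L : List (α × Bool), List.Chain' R L → FreeGroup.reduce L = L := by
  intro L
  induction L with
  | nil => exact fun _ => rfl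
  | cons a L ih =>
    intro h
    have htail : FreeGroup.reduce L = L := ih h.tail
    rw [FreeGroup.reduce.cons, htail]
    cases L with
    | nil => rfl
    | cons b tl =>
      have hR : R a b := (List.isChain_cons_cons.mp h).1
      simp only [R] at hR
      exact if_neg hR

lemma chain'_of_reduce_eq_self {α : Type*} [DecidableEq α] :
    ∀ L : List (α × Bool), FreeGroup.reduce L = L → List.Chain' R L := by
  intro L
  induction L with
  | nil => exact fun _ => List.isChain_nil
  | cons a L ih =>
    intro h
    rw [FreeGroup.reduce.cons] at h
    cases hr : FreeGroup.reduce L with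
    | nil =>
      rw [hr] at h
      -- h : [a] = a :: L
      have hL : L = [] := by
        injection h with _ h2
        exact h2.symm
      rw [hL]
      exact List.isChain_singleton a
    | cons b tl =>
      rw [hr] at h
      dsimp only at h
      by_cases hc : a.1 = b.1 ∧ a.2 = !b.2
      · rw [if_pos hc] at h
        exfalso
        have h1 : (FreeGroup.reduce L).length ≤ L.length :=
          FreeGroup.Red.length_le FreeGroup.reduce.red
        rw [hr] at h1
        have h2 : tl.length = L.length + 1 := by rw [h]; simp
        simp [h2, List.length_cons] at h1
      · rw [if_neg hc] at h
        have hL : L = b :: tl := by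
          injection h with _ h2
          exact h2.symm
        subst hL
        have : FreeGroup.reduce (b :: tl) = b :: tl := hr
        exact List.isChain_cons_cons.mpr ⟨hc, ih this⟩

/-- For a nontrivial reduced word `w` and a generator `of i` whose index avoids the first
letter of `w`, the product `w⁻¹ * of i * w` is reduced, so its norm is `2 * norm w + 1`. -/
lemma exists_norm_conj_ge {n : ℕ} (hn : 2 ≤ n) (w : FreeGroup (Fin n)) :
    ∃ i : Fin n, 2 * w.norm ≤ (w⁻¹ * FreeGroup.of i * w).norm := by
  rcases eq_or_ne w 1 with rfl | hw
  · refine ⟨⟨0, by omega⟩, ?_⟩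
    simp [FreeGroup.norm_of]
  · have hW : w.toWord ≠ [] := fun h => hw (FreeGroup.toWord_eq_nil_iff.mp h)
    obtain ⟨p, W', hWeq⟩ := List.exists_cons_of_ne_nil hW
    have h0 : (0 : ℕ) < n := by omega
    have h1 : (1 : ℕ) < n := by omega
    obtain ⟨i, hip⟩ : ∃ i : Fin n, i ≠ p.1 := by
      by_cases hp : p.1 = ⟨0, h0⟩
      · refine ⟨⟨1, h1⟩, ?_⟩
        rw [hp]
        simp [Fin.ext_iff]
      · exact ⟨⟨0, h0⟩, fun h => hp h.symm⟩
    set W := w.toWord with hWdef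
    set L : List (Fin n × Bool) := FreeGroup.invRev W ++ (i, true) :: W with hL
    have hmk : w = FreeGroup.mk W := (FreeGroup.mk_toWord).symm
    have hmkL : w⁻¹ * FreeGroup.of i * w = FreeGroup.mk L := by
      calc w⁻¹ * FreeGroup.of i * w
          = FreeGroup.mk (FreeGroup.invRev W) * FreeGroup.mk [(i, true)] *
              FreeGroup.mk W := by
            rw [← FreeGroup.inv_mk, ← hmk]
            rfl
        _ = FreeGroup.mk L := by
            rw [FreeGroup.mul_mk, FreeGroup.mul_mk, hL, List.append_assoc]
            rfl
    have hcW : List.Chain' R W := chain'_of_reduce_eq_self W (FreeGroup.reduce_toWord w)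
    have hcInv : List.Chain' R (FreeGroup.invRev W) := by
      have h := chain'_of_reduce_eq_self (w⁻¹).toWord (FreeGroup.reduce_toWord w⁻¹)
      rwa [FreeGroup.toWord_inv] at h
    have hlast : (FreeGroup.invRev W).getLast? = some (p.1, !p.2) := by
      show ((List.map (fun g : Fin n × Bool => (g.1, !g.2)) W).reverse).getLast? = _
      rw [List.getLast?_reverse, List.head?_map, hWeq]
      rfl
    have hchain : List.Chain' R L := by
      rw [hL, List.Chain', List.isChain_append]
      refine ⟨hcInv, ?_, ?_⟩
      · rw [hWeq] at hcW ⊢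
        exact List.isChain_cons_cons.mpr ⟨fun h => hip h.1, hcW⟩
      · intro x hx y hy
        rw [hlast, Option.mem_def, Option.some.injEq] at hx
        rw [List.head?_cons, Option.mem_def, Option.some.injEq] at hy
        subst hx; subst hy
        exact fun h => hip (by exact h.1.symm)
    have hred : FreeGroup.reduce L = L := reduce_eq_self_of_chain' L hchain
    have hnorm : (w⁻¹ * FreeGroup.of i * w).norm = L.length := by
      rw [hmkL]
      show (FreeGroup.mk L).toWord.length = L.length
      rw [FreeGroup.toWord_mk, hred]
    have hlen : L.length = 2 * W.length + 1 := by
      rw [hL]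
      rw [List.length_append, FreeGroup.invRev_length, List.length_cons]
      omega
    have hnw : w.norm = W.length := rfl
    exact ⟨i, by rw [hnorm, hlen, hnw]; omega⟩

end DispAux

/-- The displacement bound `2⋅|c⋅c'|_X ≤ L_{YX}(c) ⬝ L_{XY}(c')`, where
`L_{YX}(c) = max_{x ∈ X} |c⁻¹ x c|_Y` and `L_{XY}(c') = max_{y ∈ Y} |c'⁻¹ y c'|_X`. -/
theorem two_mul_wordLength_le {F : Type*} [Group F] {n : ℕ} (hn : 2 ≤ n)
    (X Y : Fin n → F) (hX : IsFreeBasis X) (hY : IsFreeBasis Y)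
    (c c' : F) :
    2 * wordLength (Set.range X) (c * c') ≤
      (Finset.univ.sup fun i => wordLength (Set.range Y) (c⁻¹ * X i * c)) *
        (Finset.univ.sup fun i => wordLength (Set.range X) (c'⁻¹ * Y i * c')) := by
  classical
  set S := Set.range X with hS
  set T := Set.range Y with hT
  have repX : ∀ g : F, DispAux.HasRep S g := DispAux.hasRep_all X hX.2
  have repY : ∀ g : F, DispAux.HasRep T g := DispAux.hasRep_all Y hY.2
  set A := (Finset.univ.sup fun i => wordLength T (c⁻¹ * X i * c)) with hA
  set B := (Finset.univ.sup fun i => wordLength S (c'⁻¹ * Y i * c')) with hB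
  have stepA : ∀ i : Fin n, wordLength S ((c * c')⁻¹ * X i * (c * c')) ≤ A * B := by
    intro i
    obtain ⟨L, hOk, hprod, hlen⟩ := DispAux.exists_min_list T (c⁻¹ * X i * c) (repY _)
    have hm : L.length ≤ A := by
      rw [hlen, hA]
      exact Finset.le_sup (f := fun i => wordLength T (c⁻¹ * X i * c)) (Finset.mem_univ i)
    have heq : (c * c')⁻¹ * X i * (c * c') =
        (L.map fun z => c'⁻¹ * z * c'⁻¹⁻¹).prod := by
      rw [DispAux.map_conj_prod c'⁻¹ L, ← hprod]
      group
    rw [heq]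
    have hletter : ∀ z ∈ L.map fun z => c'⁻¹ * z * c'⁻¹⁻¹, wordLength S z ≤ B := by
      intro z hz
      rw [List.mem_map] at hz
      obtain ⟨x, hx, rfl⟩ := hz
      rcases hOk x hx with ⟨j, rfl⟩ | ⟨j, hj⟩
      · have h : c'⁻¹ * Y j * c'⁻¹⁻¹ = c'⁻¹ * Y j * c' := by group
        rw [h, hB]
        exact Finset.le_sup (f := fun j => wordLength S (c'⁻¹ * Y j * c')) (Finset.mem_univ j)
      · have hx' : x = (Y j)⁻¹ := by rw [hj, inv_inv]
        have h : c'⁻¹ * x * c'⁻¹⁻¹ = (c'⁻¹ * Y j * c')⁻¹ := by rw [hx']; group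
        rw [h]
        refine le_trans (DispAux.wordLength_inv_le S _ (repX _)) ?_
        rw [hB]
        exact Finset.le_sup (f := fun j => wordLength S (c'⁻¹ * Y j * c')) (Finset.mem_univ j)
    calc wordLength S (L.map fun z => c'⁻¹ * z * c'⁻¹⁻¹).prod
        ≤ (L.map fun z => c'⁻¹ * z * c'⁻¹⁻¹).length * B :=
          DispAux.wordLength_list_prod_le S B repX _ hletter
      _ = L.length * B := by rw [List.length_map]
      _ ≤ A * B := Nat.mul_le_mul_right B hm
  obtain ⟨w, hw⟩ := hX.2 (c * c')
  obtain ⟨i, hi⟩ := DispAux.exists_norm_conj_ge hn w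
  have h1 : wordLength S (c * c') = w.norm := by
    rw [← hw]
    exact DispAux.wordLength_lift_eq_norm X hX w
  have h2 : wordLength S ((c * c')⁻¹ * X i * (c * c')) = (w⁻¹ * FreeGroup.of i * w).norm := by
    have h : FreeGroup.lift X (w⁻¹ * FreeGroup.of i * w) = (c * c')⁻¹ * X i * (c * c') := by
      rw [map_mul, map_mul, map_inv, hw, FreeGroup.lift_apply_of]
    rw [← h]
    exact DispAux.wordLength_lift_eq_norm X hX _
  calc 2 * wordLength S (c * c') = 2 * w.norm := by rw [h1]
    _ ≤ (w⁻¹ * FreeGroup.of i * w).norm := hi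
    _ = wordLength S ((c * c')⁻¹ * X i * (c * c')) := h2.symm
    _ ≤ A * B := stepA i
end

section
/- Suppose c ∈ F attains the minimum, i.e., L_{YX}(c) = ℓ_{YX}. Then for every w ∈ F, |c w c⁻¹|_X ≤ λ·|w|_Y + λ². -/
namespace Lemma42Aux

open FreeGroup


variable {α : Type*} [DecidableEq α]

theorem reduce_eq_self_iff (W : List (α × Bool)) :
    reduce W = W ↔ W.Chain' (fun p q => ¬(p.1 = q.1 ∧ p.2 = !q.2)) := by
  induction W with
  | nil => simp; exact List.isChain_nil
  | cons x t ih =>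
    constructor
    · intro h
      rcases ht : reduce t with _ | ⟨hd, tl⟩
      · rw [reduce.cons, ht] at h
        simp only [List.cons.injEq] at h
        rw [← h.2]; simp; exact List.isChain_singleton _
      · rw [reduce.cons, ht] at h
        dsimp only at h
        by_cases hcond : x.1 = hd.1 ∧ x.2 = !hd.2
        · rw [if_pos hcond] at h
          exfalso
          have h1 : (reduce t).length ≤ t.length := Red.length_le reduce.red
          rw [ht] at h1
          have h2 := congrArg List.length h
          simp at h2 h1
          omega
        · rw [if_neg hcond] at h
          simp only [List.cons.injEq] at h
          have ht2 : t = hd :: tl := h.2.symm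
          have hred : reduce t = t := by rw [ht, ht2]
          rw [List.Chain', List.isChain_cons]
          refine ⟨?_, ih.mp hred⟩
          intro y hy
          rw [ht2] at hy
          simp at hy
          rw [← hy]
          exact hcond
    · intro h
      rw [List.Chain', List.isChain_cons] at h
      have hred : reduce t = t := ih.mpr h.2
      rcases t with _ | ⟨hd, tl⟩
      · exact reduce_singleton x
      · rw [reduce.cons, hred]
        dsimp only
        rw [if_neg (h.1 hd rfl)]

theorem norm_conj_of (z : FreeGroup α) {i : α}
    (hi : ∀ p ∈ z.toWord.head?, i ≠ p.1) :
    FreeGroup.norm (z⁻¹ * of i * z) = 2 * FreeGroup.norm z + 1 := by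
  set L := z.toWord with hL
  have hred : reduce L = L := reduce_toWord z
  have hW : z⁻¹ * of i * z = mk (invRev L ++ (i, true) :: L) := by
    have h1 : z⁻¹ = mk (invRev L) := by
      rw [← mk_toWord (x := z⁻¹), toWord_inv, hL]
    have h2 : z = mk L := by rw [hL, mk_toWord]
    have h3 : of i = mk [(i, true)] := rfl
    rw [h1, h3, h2, mul_mk, mul_mk, List.append_assoc]
    rfl
  have hchain : (invRev L ++ (i, true) :: L).Chain'
      (fun p q => ¬(p.1 = q.1 ∧ p.2 = !q.2)) := by
    rw [List.Chain', List.isChain_append]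
    refine ⟨?_, ?_, ?_⟩
    · exact (reduce_eq_self_iff (invRev L)).1 (by rw [reduce_invRev, hred])
    · rw [List.isChain_cons]
      refine ⟨?_, (reduce_eq_self_iff L).1 hred⟩
      intro y hy
      rintro ⟨h1, -⟩
      exact hi y hy h1
    · intro p hp q hq
      simp only [List.head?_cons, Option.mem_def, Option.some.injEq] at hq
      subst hq
      rintro ⟨h1, -⟩
      apply hi (p.1, !p.2)
      · unfold L
        rw [invRev] at hp
        rw [List.getLast?_reverse, List.head?_map] at hp
        simp only [Option.mem_def, Option.map_eq_some_iff] at hp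
        obtain ⟨q, hq1, hq2⟩ := hp
        simp only [Option.mem_def]
        rw [hq1]
        rw [← hq2]
        simp
      · simpa using h1.symm
  have h5 : FreeGroup.norm (mk (invRev L ++ (i, true) :: L))
      = (invRev L ++ (i, true) :: L).length := by
    rw [FreeGroup.norm, toWord_mk, (reduce_eq_self_iff _).2 hchain]
  rw [hW, h5]
  have h6 : FreeGroup.norm z = L.length := rfl
  rw [h6]
  simp [invRev_length, two_mul]
  omega

theorem exists_norm_conj {n : ℕ} (hn : 2 ≤ n) (z : FreeGroup (Fin n)) (hz : z ≠ 1) :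
    ∃ i : Fin n, 2 * FreeGroup.norm z + 1 ≤ FreeGroup.norm (z⁻¹ * of i * z) := by
  have hL : z.toWord ≠ [] := fun h => hz (toWord_eq_nil_iff.mp h)
  obtain ⟨p, hp⟩ : ∃ p, z.toWord.head? = some p := by
    rcases h : z.toWord with _ | ⟨p, t⟩
    · exact absurd h hL
    · exact ⟨p, rfl⟩
  have : Nontrivial (Fin n) := Fin.nontrivial_iff_two_le.mpr hn
  obtain ⟨i, hi⟩ := exists_ne p.1
  refine ⟨i, (norm_conj_of z ?_).ge⟩
  intro q hq
  rw [hp] at hq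
  simp only [Option.mem_def, Option.some.injEq] at hq
  rw [← hq]
  exact hi


theorem mem_of_list {G : Type*} [Group G] (S : Set G) (L : List G)
    (h : ∀ x ∈ L, x ∈ S ∨ x⁻¹ ∈ S) :
    L.length ∈ {m : ℕ | ∃ f : Fin m → G,
      (∀ i, f i ∈ S ∨ (f i)⁻¹ ∈ S) ∧ L.prod = (List.ofFn f).prod} :=
  ⟨L.get, fun i => h _ (L.get_mem i), by rw [List.ofFn_get]⟩

theorem wordLength_le_of_list {G : Type*} [Group G] (S : Set G) (L : List G)
    (h : ∀ x ∈ L, x ∈ S ∨ x⁻¹ ∈ S) : wordLength S L.prod ≤ L.length :=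
  Nat.sInf_le (mem_of_list S L h)

theorem norm_list_prod_le {α : Type*} [DecidableEq α] (M : List (FreeGroup α)) :
    FreeGroup.norm M.prod ≤ (M.map FreeGroup.norm).sum := by
  induction M with
  | nil => simp [FreeGroup.norm_one]
  | cons a M ih =>
    simp only [List.prod_cons, List.map_cons, List.sum_cons]
    exact (FreeGroup.norm_mul_le a M.prod).trans (by omega)

variable {F : Type*} [Group F] {n : ℕ}

/-- The isomorphism determined by a free basis. -/
noncomputable def equivOf {X : Fin n → F} (hX : IsFreeBasis X) : FreeGroup (Fin n) ≃* F :=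
  MulEquiv.ofBijective (FreeGroup.lift X : FreeGroup (Fin n) →* F) hX

theorem equivOf_apply {X : Fin n → F} (hX : IsFreeBasis X) (z : FreeGroup (Fin n)) :
    equivOf hX z = FreeGroup.lift X z := rfl

theorem wordLength_eq_norm {X : Fin n → F} (hX : IsFreeBasis X) (g : F) :
    wordLength (Set.range X) g = FreeGroup.norm ((equivOf hX).symm g) := by
  set z := (equivOf hX).symm g with hz
  have hg : g = FreeGroup.lift X z := by
    rw [← equivOf_apply hX, hz, MulEquiv.apply_symm_apply]
  set h : Fin n × Bool → F := fun p => cond p.2 (X p.1) (X p.1)⁻¹ with hh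
  have hprod : (z.toWord.map h).prod = g := by
    rw [hg]
    conv_rhs => rw [← mk_toWord (x := z)]
    rw [lift_mk]
  have hmem : wordLength (Set.range X) g ≤ FreeGroup.norm z := by
    have := wordLength_le_of_list (Set.range X) (z.toWord.map h) ?_
    · rwa [hprod, List.length_map] at this
    · rintro x hx
      simp only [List.mem_map] at hx
      obtain ⟨p, -, rfl⟩ := hx
      rcases p with ⟨j, b⟩
      cases b
      · right; simpa [hh] using ⟨j, rfl⟩
      · left; simpa [hh] using ⟨j, rfl⟩
  refine le_antisymm hmem ?_
  apply le_csInf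
  · refine ⟨(z.toWord.map h).length, ?_⟩
    have hm := mem_of_list (Set.range X) (z.toWord.map h) ?_
    · obtain ⟨f, hf1, hf2⟩ := hm
      exact ⟨f, hf1, by rw [← hf2, hprod]⟩
    · rintro x hx
      simp only [List.mem_map] at hx
      obtain ⟨p, -, rfl⟩ := hx
      rcases p with ⟨j, b⟩
      cases b
      · right; simpa [hh] using ⟨j, rfl⟩
      · left; simpa [hh] using ⟨j, rfl⟩
  · rintro m ⟨f, hf, rfl⟩
    -- build a free group word
    have hchoice : ∀ i, ∃ u : FreeGroup (Fin n),
        FreeGroup.lift X u = f i ∧ FreeGroup.norm u ≤ 1 := by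
      intro i
      rcases hf i with ⟨j, hj⟩ | ⟨j, hj⟩
      · exact ⟨of j, by simp [hj], by simp [FreeGroup.norm_of]⟩
      · refine ⟨(of j)⁻¹, ?_, by simp [FreeGroup.norm_inv_eq, FreeGroup.norm_of]⟩
        rw [MonoidHom.map_inv, FreeGroup.lift_apply_of, hj, inv_inv]
    choose d hd1 hd2 using hchoice
    have hlift : FreeGroup.lift X (List.ofFn d).prod = (List.ofFn f).prod := by
      rw [map_list_prod]
      congr 1
      rw [List.map_ofFn]
      congr 1
      ext i
      exact hd1 i
    have hz2 : z = (List.ofFn d).prod := by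
      rw [hz]
      apply (MulEquiv.symm_apply_eq _).mpr
      rw [equivOf_apply, hlift]
    rw [hz2]
    calc FreeGroup.norm (List.ofFn d).prod ≤ ((List.ofFn d).map FreeGroup.norm).sum :=
          norm_list_prod_le _
      _ ≤ m := by
          rw [List.map_ofFn]
          have := List.sum_le_card_nsmul (List.ofFn (FreeGroup.norm ∘ d)) 1 ?_
          · simpa using this
          · intro x hx
            rw [List.mem_ofFn] at hx
            obtain ⟨i, rfl⟩ := hx
            exact hd2 i


section Derived

variable {F : Type*} [Group F] {n : ℕ}

theorem wl_one {X : Fin n → F} (hX : IsFreeBasis X) :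
    wordLength (Set.range X) 1 = 0 := by
  rw [wordLength_eq_norm hX, _root_.map_one, FreeGroup.norm_one]

theorem wl_mul_le {X : Fin n → F} (hX : IsFreeBasis X) (g h : F) :
    wordLength (Set.range X) (g * h) ≤
      wordLength (Set.range X) g + wordLength (Set.range X) h := by
  rw [wordLength_eq_norm hX, wordLength_eq_norm hX, wordLength_eq_norm hX, _root_.map_mul]
  exact FreeGroup.norm_mul_le _ _

theorem wl_inv {X : Fin n → F} (hX : IsFreeBasis X) (g : F) :
    wordLength (Set.range X) g⁻¹ = wordLength (Set.range X) g := by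
  rw [wordLength_eq_norm hX, wordLength_eq_norm hX, _root_.map_inv]
  exact FreeGroup.norm_inv_eq

theorem exists_conj_lb (hn : 2 ≤ n) {X : Fin n → F} (hX : IsFreeBasis X)
    (t : F) (ht : t ≠ 1) :
    ∃ i, 2 * wordLength (Set.range X) t + 1 ≤
      wordLength (Set.range X) (t⁻¹ * X i * t) := by
  set z := (equivOf hX).symm t with hz
  have hz1 : z ≠ 1 := by
    intro h
    apply ht
    have := congrArg (equivOf hX) h
    rwa [MulEquiv.apply_symm_apply, _root_.map_one] at this
  obtain ⟨i, hi⟩ := exists_norm_conj hn z hz1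
  refine ⟨i, ?_⟩
  rw [wordLength_eq_norm hX, wordLength_eq_norm hX]
  have hXi : (equivOf hX).symm (X i) = FreeGroup.of i := by
    rw [MulEquiv.symm_apply_eq, equivOf_apply, FreeGroup.lift_apply_of]
  rw [_root_.map_mul, _root_.map_mul, _root_.map_inv, hXi, ← hz]
  exact hi

theorem wl_conj_word_le {X Y : Fin n → F} (hX : IsFreeBasis X) (e : F) (k : ℕ)
    (h : ∀ i, wordLength (Set.range X) (e⁻¹ * Y i * e) ≤ k)
    (L : List (Fin n × Bool)) :
    wordLength (Set.range X) (e⁻¹ * FreeGroup.lift Y (FreeGroup.mk L) * e) ≤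
      k * L.length := by
  induction L with
  | nil =>
    have : FreeGroup.mk ([] : List (Fin n × Bool)) = 1 := rfl
    simp [this, wl_one hX]
  | cons p L ih =>
    have hsplit : FreeGroup.mk (p :: L) = FreeGroup.mk [p] * FreeGroup.mk L := by
      rw [FreeGroup.mul_mk]; rfl
    have heq : e⁻¹ * FreeGroup.lift Y (FreeGroup.mk (p :: L)) * e =
        (e⁻¹ * FreeGroup.lift Y (FreeGroup.mk [p]) * e) *
        (e⁻¹ * FreeGroup.lift Y (FreeGroup.mk L) * e) := by
      rw [hsplit, _root_.map_mul]; group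
    have hone : wordLength (Set.range X) (e⁻¹ * FreeGroup.lift Y (FreeGroup.mk [p]) * e) ≤ k := by
      rcases p with ⟨j, b⟩
      cases b
      · have : FreeGroup.lift Y (FreeGroup.mk [(j, false)]) = (Y j)⁻¹ := by
          rw [FreeGroup.lift_mk]; simp
        rw [this]
        have h2 : e⁻¹ * (Y j)⁻¹ * e = (e⁻¹ * Y j * e)⁻¹ := by group
        rw [h2, wl_inv hX]
        exact h j
      · have : FreeGroup.lift Y (FreeGroup.mk [(j, true)]) = Y j := by
          rw [FreeGroup.lift_mk]; simp
        rw [this]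
        exact h j
    calc wordLength (Set.range X) (e⁻¹ * FreeGroup.lift Y (FreeGroup.mk (p :: L)) * e)
        ≤ wordLength (Set.range X) (e⁻¹ * FreeGroup.lift Y (FreeGroup.mk [p]) * e) +
          wordLength (Set.range X) (e⁻¹ * FreeGroup.lift Y (FreeGroup.mk L) * e) := by
          rw [heq]; exact wl_mul_le hX _ _
      _ ≤ k + k * L.length := Nat.add_le_add hone ih
      _ = k * (L.length + 1) := by ring
      _ = k * (p :: L).length := by simp

theorem wl_conj_le {X Y : Fin n → F} (hX : IsFreeBasis X) (hY : IsFreeBasis Y)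
    (e : F) (k : ℕ)
    (h : ∀ i, wordLength (Set.range X) (e⁻¹ * Y i * e) ≤ k) (w : F) :
    wordLength (Set.range X) (e⁻¹ * w * e) ≤ k * wordLength (Set.range Y) w := by
  rw [wordLength_eq_norm hY]
  set z := (equivOf hY).symm w with hz
  have hw : w = FreeGroup.lift Y (FreeGroup.mk z.toWord) := by
    rw [FreeGroup.mk_toWord, ← equivOf_apply hY, hz, MulEquiv.apply_symm_apply]
  rw [hw]
  exact wl_conj_word_le hX e k h z.toWord

end Derived

end Lemma42Aux

/-- `L_{YX}(c) = max_{x ∈ X} |c⁻¹ x c|_Y`, the length of the morphism between unit roses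
determined on vertices by `u ↦ u⋅c`. -/
noncomputable def morphismLength {F : Type*} [Group F] {n : ℕ}
    (X Y : Fin n → F) (c : F) : ℕ :=
  Finset.univ.sup fun i => wordLength (Set.range Y) (c⁻¹ * X i * c)

open Lemma42Aux in
/-- Lemma 4.2 in vertex coordinates: if `c` realizes the minimal morphism length
`ℓ_{YX} = min_c L_{YX}(c)`, then `|c w c⁻¹|_X ≤ λ⋅|w|_Y + λ²` for all `w`, where
`λ = max (ℓ_{YX}, ℓ_{XY})`. -/
theorem wordLength_conj_of_minimal {F : Type*} [Group F] {n : ℕ} (hn : 2 ≤ n)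
    (X Y : Fin n → F) (hX : IsFreeBasis X) (hY : IsFreeBasis Y)
    (c : F) (hc : morphismLength X Y c = sInf (Set.range (morphismLength X Y)))
    (w : F) :
    wordLength (Set.range X) (c * w * c⁻¹) ≤
      (max (sInf (Set.range (morphismLength X Y))) (sInf (Set.range (morphismLength Y X)))) *
        wordLength (Set.range Y) w +
      (max (sInf (Set.range (morphismLength X Y))) (sInf (Set.range (morphismLength Y X)))) ^ 2 := by
  set l1 := sInf (Set.range (morphismLength X Y)) with hl1
  set l2 := sInf (Set.range (morphismLength Y X)) with hl2
  set lam := max l1 l2 with hlamdef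
  obtain ⟨e, he⟩ : l2 ∈ Set.range (morphismLength Y X) :=
    Nat.sInf_mem ⟨morphismLength Y X 1, 1, rfl⟩
  have hYX : ∀ i, wordLength (Set.range X) (e⁻¹ * Y i * e) ≤ lam := by
    intro i
    have h := Finset.le_sup (f := fun i => wordLength (Set.range X) (e⁻¹ * Y i * e))
      (Finset.mem_univ i)
    have h2 : morphismLength Y X e ≤ lam := le_trans he.le (le_max_right _ _)
    exact le_trans h h2
  have hXY : ∀ i, wordLength (Set.range Y) (c⁻¹ * X i * c) ≤ l1 := by
    intro i
    have h := Finset.le_sup (f := fun i => wordLength (Set.range Y) (c⁻¹ * X i * c))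
      (Finset.mem_univ i)
    exact le_trans h hc.le
  set t := c * e with htdef
  have ht2 : 2 * wordLength (Set.range X) t ≤ lam ^ 2 := by
    by_cases h1 : t = 1
    · rw [h1, wl_one hX]
      exact Nat.zero_le _
    · obtain ⟨i, hi⟩ := exists_conj_lb hn hX t h1
      have hub : wordLength (Set.range X) (t⁻¹ * X i * t) ≤ lam * lam := by
        have heq : t⁻¹ * X i * t = e⁻¹ * (c⁻¹ * X i * c) * e := by
          rw [htdef]; group
        rw [heq]
        calc wordLength (Set.range X) (e⁻¹ * (c⁻¹ * X i * c) * e)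
            ≤ lam * wordLength (Set.range Y) (c⁻¹ * X i * c) :=
              wl_conj_le hX hY e lam hYX _
          _ ≤ lam * l1 := Nat.mul_le_mul_left _ (hXY i)
          _ ≤ lam * lam := Nat.mul_le_mul_left _ (le_max_left _ _)
      have := hi.trans hub
      rw [sq]
      omega
  have hconj : wordLength (Set.range X) (e⁻¹ * w * e) ≤ lam * wordLength (Set.range Y) w :=
    wl_conj_le hX hY e lam hYX w
  have hkey : c * w * c⁻¹ = t * (e⁻¹ * w * e) * t⁻¹ := by
    rw [htdef]; group
  calc wordLength (Set.range X) (c * w * c⁻¹)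
      = wordLength (Set.range X) (t * (e⁻¹ * w * e) * t⁻¹) := by rw [hkey]
    _ ≤ wordLength (Set.range X) (t * (e⁻¹ * w * e)) + wordLength (Set.range X) t⁻¹ :=
        wl_mul_le hX _ _
    _ ≤ wordLength (Set.range X) t + wordLength (Set.range X) (e⁻¹ * w * e) +
        wordLength (Set.range X) t⁻¹ := Nat.add_le_add_right (wl_mul_le hX _ _) _
    _ = 2 * wordLength (Set.range X) t + wordLength (Set.range X) (e⁻¹ * w * e) := by
        rw [wl_inv hX]; ring
    _ ≤ lam ^ 2 + lam * wordLength (Set.range Y) w := Nat.add_le_add ht2 hconj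
    _ = lam * wordLength (Set.range Y) w + lam ^ 2 := by ring
end

section
/- Suppose c ∈ F attains the minimum, i.e., L_{YX}(c) = ℓ_{YX}. Let u, u' ∈ F, let x, x' ∈ X ∪ X⁻¹, and suppose there exist v ∈ F and y ∈ Y ∪ Y⁻¹ such that the oriented edge (v, vy) lies on the Y-geodesic from uc to uxc and also lies on the Y-geodesic from u'c to u'x'c. Then |u⁻¹u'|_X ≤ 4λ² + 2. -/
/-- The oriented edge `(v, v⋅y)` of the Cayley tree of `(F, S)` lies on the
`S`-geodesic from `a` to `b`. -/
noncomputable def liesOnGeodesic {F : Type*} [Group F] (S : Set F) (v y a b : F) : Prop :=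
  wordLength S (a⁻¹ * v) + 1 + wordLength S ((v * y)⁻¹ * b) = wordLength S (a⁻¹ * b)

namespace CommonEdgeAux

/-- The no-cancellation relation between adjacent letters of a word. -/
def NoCancel {α : Type*} (a b : α × Bool) : Prop := ¬(a.1 = b.1 ∧ a.2 = !b.2)

variable {α : Type*} [DecidableEq α]

theorem reduce_eq_self_of_chain' {L : List (α × Bool)} (h : L.Chain' NoCancel) :
    FreeGroup.reduce L = L := by
  induction L with
  | nil => rfl
  | cons x t ih =>
    rw [FreeGroup.reduce.cons, ih h.tail]
    cases t with
    | nil => rfl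
    | cons hd tl =>
      simp only
      rw [if_neg (List.isChain_cons_cons.mp h).1]

theorem chain'_of_reduce_eq_self {L : List (α × Bool)} (h : FreeGroup.reduce L = L) :
    L.Chain' NoCancel := by
  induction L with
  | nil => exact List.isChain_nil
  | cons x t ih =>
    rw [FreeGroup.reduce.cons] at h
    rcases ht : FreeGroup.reduce t with _ | ⟨hd, tl⟩ <;> rw [ht] at h
    · simp only at h
      have : t = [] := by
        have := congrArg List.length h; simpa using this.symm
      subst this; simp [List.Chain']
    · simp only at h
      by_cases hcond : x.1 = hd.1 ∧ x.2 = !hd.2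
      · rw [if_pos hcond] at h
        exfalso
        have hlen : (FreeGroup.reduce t).length ≤ t.length :=
          FreeGroup.Red.length_le (FreeGroup.reduce.red)
        rw [ht] at hlen
        have := congrArg List.length h
        simp at this hlen; omega
      · rw [if_neg hcond] at h
        have ht' : t = hd :: tl := by
          have := (List.cons.injEq _ _ _ _).mp h
          exact this.2.symm
        subst ht'
        exact List.isChain_cons_cons.mpr ⟨hcond, ih (by rw [ht])⟩

theorem norm_conj_of (x : FreeGroup α) (i : α)
    (hhead : ∀ p ∈ x.toWord.head?, p.1 ≠ i) :
    FreeGroup.norm (x⁻¹ * FreeGroup.of i * x) = 2 * FreeGroup.norm x + 1 := by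
  have hw : x.toWord.Chain' NoCancel := chain'_of_reduce_eq_self (FreeGroup.reduce_toWord x)
  set w := x.toWord with hwdef
  have hx : x = FreeGroup.mk w := (FreeGroup.mk_toWord).symm
  have hexp : x⁻¹ * FreeGroup.of i * x
      = FreeGroup.mk (FreeGroup.invRev w ++ (i, true) :: w) := by
    rw [hx, FreeGroup.inv_mk]
    show FreeGroup.mk (FreeGroup.invRev w) * FreeGroup.mk [(i, true)] * FreeGroup.mk w = _
    rw [FreeGroup.mul_mk, FreeGroup.mul_mk, List.append_assoc, List.singleton_append]
  have hchain : (FreeGroup.invRev w ++ (i, true) :: w).Chain' NoCancel := by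
    rw [List.Chain', List.isChain_append]
    refine ⟨?_, ?_, ?_⟩
    · unfold FreeGroup.invRev
      rw [List.isChain_reverse, List.isChain_map]
      refine hw.imp ?_
      rintro a b hab ⟨h1, h2⟩
      exact hab ⟨h1.symm, by simpa using h2.symm⟩
    · refine List.isChain_cons.mpr ⟨?_, hw⟩
      rintro y hy ⟨h1, _⟩
      exact hhead y hy h1.symm
    · intro p hp q hq
      simp only [List.head?_cons, Option.mem_some_iff] at hq
      subst hq
      unfold FreeGroup.invRev at hp
      rw [List.getLast?_reverse, List.head?_map] at hp
      obtain ⟨p0, hp0, rfl⟩ := Option.mem_map.mp hp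
      rintro ⟨h1, _⟩
      exact hhead p0 hp0 (by simpa using h1)
  have hred := reduce_eq_self_of_chain' hchain
  rw [hexp]
  show (FreeGroup.mk (FreeGroup.invRev w ++ (i, true) :: w)).toWord.length = _
  rw [FreeGroup.toWord_mk, hred]
  simp only [List.length_append, FreeGroup.invRev_length, List.length_cons,
    FreeGroup.norm, ← hwdef]
  omega

theorem two_gen_bound (x : FreeGroup α) {i j : α} (hij : i ≠ j) {M : ℕ}
    (hi : FreeGroup.norm (x⁻¹ * FreeGroup.of i * x) ≤ M)
    (hj : FreeGroup.norm (x⁻¹ * FreeGroup.of j * x) ≤ M) :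
    2 * FreeGroup.norm x + 1 ≤ M := by
  rcases hh : x.toWord.head? with _ | p
  · have hx1 : x = 1 := by
      rw [← FreeGroup.toWord_eq_nil_iff, ← List.head?_eq_none_iff]; exact hh
    subst hx1
    simpa using hi
  · by_cases hpi : p.1 = i
    · rw [← norm_conj_of x j ?_]
      · exact hj
      · intro q hq
        rw [hh] at hq
        simp only [Option.mem_some_iff] at hq
        subst hq; rw [hpi]; exact hij
    · rw [← norm_conj_of x i ?_]
      · exact hi
      · intro q hq
        rw [hh] at hq
        simp only [Option.mem_some_iff] at hq
        subst hq; exact hpi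

section Bridge

variable {G : Type*} [Group G] {ι : Type*} [DecidableEq ι] (X : ι → G)

theorem mem_wordLength_set (α : FreeGroup ι) :
    FreeGroup.norm α ∈ {m : ℕ | ∃ f : Fin m → G,
      (∀ i, f i ∈ Set.range X ∨ (f i)⁻¹ ∈ Set.range X) ∧
      FreeGroup.lift X α = (List.ofFn f).prod} := by
  classical
  refine ⟨fun k => (fun p : ι × Bool => cond p.2 (X p.1) (X p.1)⁻¹) (α.toWord.get k),
    ?_, ?_⟩
  · intro k
    rcases hk : α.toWord.get k with ⟨j, b⟩
    simp only [hk]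
    cases b
    · right; simp
    · left; simp
  · conv_lhs => rw [← FreeGroup.mk_toWord (x := α)]
    rw [FreeGroup.lift_mk]
    congr 1
    conv_lhs => rw [← List.ofFn_get (l := α.toWord)]
    rw [List.map_ofFn]
    rfl

theorem exists_word (l : List G)
    (hl : ∀ g ∈ l, g ∈ Set.range X ∨ g⁻¹ ∈ Set.range X) :
    ∃ β : FreeGroup ι, FreeGroup.lift X β = l.prod ∧ FreeGroup.norm β ≤ l.length := by
  classical
  induction l with
  | nil => exact ⟨1, by simp, by simp⟩
  | cons a l ih =>
    obtain ⟨β, hβ, hn⟩ := ih (fun g hg => hl g (List.mem_cons_of_mem _ hg))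
    rcases hl a List.mem_cons_self with ⟨j, hj⟩ | ⟨j, hj⟩
    · refine ⟨FreeGroup.of j * β, ?_, ?_⟩
      · rw [_root_.map_mul, FreeGroup.lift_apply_of, hβ, hj, List.prod_cons]
      · refine le_trans (FreeGroup.norm_mul_le _ _) ?_
        simp only [FreeGroup.norm_of, List.length_cons]; omega
    · refine ⟨(FreeGroup.of j)⁻¹ * β, ?_, ?_⟩
      · rw [_root_.map_mul, _root_.map_inv, FreeGroup.lift_apply_of, hβ, hj, inv_inv,
          List.prod_cons]
      · refine le_trans (FreeGroup.norm_mul_le _ _) ?_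
        simp only [FreeGroup.norm_inv_eq, FreeGroup.norm_of, List.length_cons]; omega

variable (hX : Function.Bijective (FreeGroup.lift X : FreeGroup ι →* G))
include hX

theorem wordLength_lift (α : FreeGroup ι) :
    wordLength (Set.range X) (FreeGroup.lift X α) = FreeGroup.norm α := by
  classical
  refine le_antisymm (Nat.sInf_le (mem_wordLength_set X α)) ?_
  have hne : {m : ℕ | ∃ f : Fin m → G,
      (∀ i, f i ∈ Set.range X ∨ (f i)⁻¹ ∈ Set.range X) ∧
      FreeGroup.lift X α = (List.ofFn f).prod}.Nonempty :=
    ⟨_, mem_wordLength_set X α⟩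
  obtain ⟨f, hf, hprod⟩ := Nat.sInf_mem hne
  have hfmem : ∀ g ∈ List.ofFn f, g ∈ Set.range X ∨ g⁻¹ ∈ Set.range X := by
    intro g hg
    obtain ⟨k, rfl⟩ := List.mem_ofFn.mp hg
    exact hf k
  obtain ⟨β, hβ, hn⟩ := exists_word X (List.ofFn f) hfmem
  have hβα : β = α := hX.1 (by rw [hβ, ← hprod])
  subst hβα
  simpa [wordLength] using le_trans hn (le_of_eq (List.length_ofFn (f := f)))

theorem wordLength_one : wordLength (Set.range X) (1 : G) = 0 := by
  rw [← _root_.map_one (FreeGroup.lift X), wordLength_lift X hX, FreeGroup.norm_one]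

theorem wordLength_mul_le (g h : G) :
    wordLength (Set.range X) (g * h) ≤
      wordLength (Set.range X) g + wordLength (Set.range X) h := by
  obtain ⟨a, rfl⟩ := hX.2 g
  obtain ⟨b, rfl⟩ := hX.2 h
  rw [← _root_.map_mul, wordLength_lift X hX, wordLength_lift X hX, wordLength_lift X hX]
  exact FreeGroup.norm_mul_le a b

theorem wordLength_inv (g : G) :
    wordLength (Set.range X) g⁻¹ = wordLength (Set.range X) g := by
  obtain ⟨a, rfl⟩ := hX.2 g
  rw [← _root_.map_inv, wordLength_lift X hX, wordLength_lift X hX, FreeGroup.norm_inv_eq]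

end Bridge

theorem wordLength_conj_le {G : Type*} [Group G] {ι κ : Type*}
    [DecidableEq ι] [DecidableEq κ]
    (X : ι → G) (hX : Function.Bijective (FreeGroup.lift X : FreeGroup ι →* G))
    (Y : κ → G) (hY : Function.Bijective (FreeGroup.lift Y : FreeGroup κ →* G))
    (c' : G) (lam : ℕ)
    (hlam : ∀ s : G, (s ∈ Set.range Y ∨ s⁻¹ ∈ Set.range Y) →
      wordLength (Set.range X) (c'⁻¹ * s * c') ≤ lam)
    (w : G) :
    wordLength (Set.range X) (c'⁻¹ * w * c') ≤ lam * wordLength (Set.range Y) w := by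
  have aux : ∀ l : List G, (∀ g ∈ l, g ∈ Set.range Y ∨ g⁻¹ ∈ Set.range Y) →
      wordLength (Set.range X) (c'⁻¹ * l.prod * c') ≤ lam * l.length := by
    intro l
    induction l with
    | nil =>
      intro _
      simp only [List.prod_nil, List.length_nil, Nat.mul_zero, mul_one,
        inv_mul_cancel]
      exact le_of_eq (wordLength_one X hX)
    | cons a l ih =>
      intro hmem
      have hsplit : c'⁻¹ * (a :: l).prod * c'
          = (c'⁻¹ * a * c') * (c'⁻¹ * l.prod * c') := by
        rw [List.prod_cons]; group
      rw [hsplit]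
      refine le_trans (wordLength_mul_le X hX _ _) ?_
      have h1 := hlam a (hmem a List.mem_cons_self)
      have h2 := ih (fun g hg => hmem g (List.mem_cons_of_mem _ hg))
      simp only [List.length_cons, Nat.mul_succ]
      omega
  obtain ⟨αw, hαw⟩ := hY.2 w
  have hwne : {m : ℕ | ∃ f : Fin m → G,
      (∀ i, f i ∈ Set.range Y ∨ (f i)⁻¹ ∈ Set.range Y) ∧
      w = (List.ofFn f).prod}.Nonempty := by
    refine ⟨FreeGroup.norm αw, ?_⟩
    have h := mem_wordLength_set Y αw
    rw [hαw] at h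
    exact h
  obtain ⟨f, hf, hprod⟩ := Nat.sInf_mem hwne
  have hfmem : ∀ g ∈ List.ofFn f, g ∈ Set.range Y ∨ g⁻¹ ∈ Set.range Y := by
    intro g hg
    obtain ⟨k, rfl⟩ := List.mem_ofFn.mp hg
    exact hf k
  conv_lhs => rw [hprod]
  refine le_trans (aux (List.ofFn f) hfmem) (le_of_eq ?_)
  rw [List.length_ofFn]
  rfl

end CommonEdgeAux

open CommonEdgeAux in
/-- Lemma 4.3 in vertex coordinates: if `c` realizes the minimal morphism length and the
images of the edges from `u` to `u⋅x` and from `u'` to `u'⋅x'` under the morphism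
`u ↦ u⋅c` traverse a common oriented edge `(v, v⋅y)`, then `|u⁻¹u'|_X ≤ 4λ² + 2`. -/
theorem wordLength_le_of_common_edge {F : Type*} [Group F] {n : ℕ} (hn : 2 ≤ n)
    (X Y : Fin n → F) (hX : IsFreeBasis X) (hY : IsFreeBasis Y)
    (c : F) (hc : morphismLength X Y c = sInf (Set.range (morphismLength X Y)))
    (u u' x x' : F)
    (hx : x ∈ Set.range X ∪ (Set.range X)⁻¹)
    (hx' : x' ∈ Set.range X ∪ (Set.range X)⁻¹)
    (h : ∃ v : F, ∃ y ∈ Set.range Y ∪ (Set.range Y)⁻¹,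
      liesOnGeodesic (Set.range Y) v y (u * c) (u * x * c) ∧
      liesOnGeodesic (Set.range Y) v y (u' * c) (u' * x' * c)) :
    wordLength (Set.range X) (u⁻¹ * u') ≤
      4 * (max (sInf (Set.range (morphismLength X Y)))
        (sInf (Set.range (morphismLength Y X)))) ^ 2 + 2 := by
  classical
  obtain ⟨v, y, hy, hg1, hg2⟩ := h
  rw [IsFreeBasis] at hX hY
  set l1 := sInf (Set.range (morphismLength X Y)) with hl1
  set l2 := sInf (Set.range (morphismLength Y X)) with hl2
  obtain ⟨c', hc'⟩ : ∃ c', morphismLength Y X c' = l2 :=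
    Nat.sInf_mem (Set.range_nonempty (morphismLength Y X))
  -- conjugates of X-letters by c are short in Y
  have hYx : ∀ z, z ∈ Set.range X ∪ (Set.range X)⁻¹ →
      wordLength (Set.range Y) (c⁻¹ * z * c) ≤ l1 := by
    intro z hz
    rcases hz with ⟨i, rfl⟩ | hz
    · calc wordLength (Set.range Y) (c⁻¹ * X i * c)
          ≤ Finset.univ.sup (fun j => wordLength (Set.range Y) (c⁻¹ * X j * c)) :=
            Finset.le_sup (f := fun j => wordLength (Set.range Y) (c⁻¹ * X j * c))
              (Finset.mem_univ i)
        _ = morphismLength X Y c := rfl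
        _ = l1 := hc
    · rw [Set.mem_inv] at hz
      obtain ⟨i, hi⟩ := hz
      have hrw : c⁻¹ * z * c = (c⁻¹ * z⁻¹ * c)⁻¹ := by group
      rw [hrw, wordLength_inv Y hY, ← hi]
      calc wordLength (Set.range Y) (c⁻¹ * X i * c)
          ≤ Finset.univ.sup (fun j => wordLength (Set.range Y) (c⁻¹ * X j * c)) :=
            Finset.le_sup (f := fun j => wordLength (Set.range Y) (c⁻¹ * X j * c))
              (Finset.mem_univ i)
        _ = morphismLength X Y c := rfl
        _ = l1 := hc
  -- conjugates of Y-letters by c' are short in X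
  have hXy : ∀ s : F, (s ∈ Set.range Y ∨ s⁻¹ ∈ Set.range Y) →
      wordLength (Set.range X) (c'⁻¹ * s * c') ≤ l2 := by
    intro s hs
    rcases hs with ⟨i, rfl⟩ | ⟨i, hi⟩
    · calc wordLength (Set.range X) (c'⁻¹ * Y i * c')
          ≤ Finset.univ.sup (fun j => wordLength (Set.range X) (c'⁻¹ * Y j * c')) :=
            Finset.le_sup (f := fun j => wordLength (Set.range X) (c'⁻¹ * Y j * c'))
              (Finset.mem_univ i)
        _ = morphismLength Y X c' := rfl
        _ = l2 := hc'
    · have hrw : c'⁻¹ * s * c' = (c'⁻¹ * s⁻¹ * c')⁻¹ := by group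
      rw [hrw, wordLength_inv X hX, ← hi]
      calc wordLength (Set.range X) (c'⁻¹ * Y i * c')
          ≤ Finset.univ.sup (fun j => wordLength (Set.range X) (c'⁻¹ * Y j * c')) :=
            Finset.le_sup (f := fun j => wordLength (Set.range X) (c'⁻¹ * Y j * c'))
              (Finset.mem_univ i)
        _ = morphismLength Y X c' := rfl
        _ = l2 := hc'
  -- extract the geodesic inequalities
  unfold liesOnGeodesic at hg1 hg2
  have hr1 : (u * c)⁻¹ * (u * x * c) = c⁻¹ * x * c := by group
  have hr2 : (u' * c)⁻¹ * (u' * x' * c) = c⁻¹ * x' * c := by group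
  rw [hr1] at hg1
  rw [hr2] at hg2
  have hA : wordLength (Set.range Y) ((u * c)⁻¹ * v) ≤ l1 := by
    have := hYx x hx; omega
  have hA' : wordLength (Set.range Y) ((u' * c)⁻¹ * v) ≤ l1 := by
    have := hYx x' hx'; omega
  -- the conjugate of u⁻¹u' by c is Y-short
  have hmidY : wordLength (Set.range Y) (c⁻¹ * (u⁻¹ * u') * c) ≤ l1 + l1 := by
    have hdec : c⁻¹ * (u⁻¹ * u') * c
        = ((u * c)⁻¹ * v) * (((u' * c)⁻¹ * v)⁻¹) := by group
    rw [hdec]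
    refine le_trans (wordLength_mul_le Y hY _ _) ?_
    rw [wordLength_inv Y hY]
    omega
  -- transfer to X via c'
  set a := c * c' with ha
  have hconj : ∀ w : F, wordLength (Set.range X) (a⁻¹ * w * a) ≤
      l2 * wordLength (Set.range Y) (c⁻¹ * w * c) := by
    intro w
    have hrw : a⁻¹ * w * a = c'⁻¹ * (c⁻¹ * w * c) * c' := by rw [ha]; group
    rw [hrw]
    exact wordLength_conj_le X hX Y hY c' l2 hXy _
  have hmidX : wordLength (Set.range X) (a⁻¹ * (u⁻¹ * u') * a) ≤ l2 * (l1 + l1) :=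
    le_trans (hconj _) (Nat.mul_le_mul_left _ hmidY)
  have hgen : ∀ i : Fin n, wordLength (Set.range X) (a⁻¹ * X i * a) ≤ l2 * l1 := by
    intro i
    exact le_trans (hconj _) (Nat.mul_le_mul_left _ (hYx (X i) (Or.inl ⟨i, rfl⟩)))
  -- bound the length of a
  obtain ⟨β, hβ⟩ := hX.2 a
  have h0n : 0 < n := by omega
  have h1n : 1 < n := by omega
  have hij : (⟨0, h0n⟩ : Fin n) ≠ ⟨1, h1n⟩ := fun hh => by
    simpa using congrArg Fin.val hh
  have hnorm : ∀ i : Fin n, FreeGroup.norm (β⁻¹ * FreeGroup.of i * β) ≤ l2 * l1 := by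
    intro i
    rw [← wordLength_lift X hX]
    have hli : FreeGroup.lift X (β⁻¹ * FreeGroup.of i * β) = a⁻¹ * X i * a := by
      rw [_root_.map_mul, _root_.map_mul, _root_.map_inv, hβ, FreeGroup.lift_apply_of]
    rw [hli]
    exact hgen i
  have hab := two_gen_bound β hij (hnorm ⟨0, h0n⟩) (hnorm ⟨1, h1n⟩)
  have hwa : wordLength (Set.range X) a = FreeGroup.norm β := by
    rw [← hβ, wordLength_lift X hX]
  -- final assembly
  have hfin : wordLength (Set.range X) (u⁻¹ * u') ≤
      wordLength (Set.range X) a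
      + wordLength (Set.range X) (a⁻¹ * (u⁻¹ * u') * a)
      + wordLength (Set.range X) a := by
    have hdec : u⁻¹ * u' = (a * (a⁻¹ * (u⁻¹ * u') * a)) * a⁻¹ := by group
    calc wordLength (Set.range X) (u⁻¹ * u')
        = wordLength (Set.range X) ((a * (a⁻¹ * (u⁻¹ * u') * a)) * a⁻¹) := by
          rw [← hdec]
      _ ≤ wordLength (Set.range X) (a * (a⁻¹ * (u⁻¹ * u') * a))
          + wordLength (Set.range X) a⁻¹ := wordLength_mul_le X hX _ _
      _ ≤ (wordLength (Set.range X) a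
          + wordLength (Set.range X) (a⁻¹ * (u⁻¹ * u') * a))
          + wordLength (Set.range X) a⁻¹ :=
          Nat.add_le_add_right (wordLength_mul_le X hX _ _) _
      _ = _ := by rw [wordLength_inv X hX]
  have hmidX2 : wordLength (Set.range X) (a⁻¹ * (u⁻¹ * u') * a)
      ≤ l2 * l1 + l2 * l1 := le_trans hmidX (le_of_eq (by ring))
  have hP : l2 * l1 ≤ (max l1 l2) ^ 2 := by
    calc l2 * l1 ≤ max l1 l2 * max l1 l2 :=
          Nat.mul_le_mul (le_max_right l1 l2) (le_max_left l1 l2)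
      _ = (max l1 l2) ^ 2 := (sq (max l1 l2)).symm
  rw [← hwa] at hab
  generalize hQ : l2 * l1 = Q at hab hmidX2 hP
  generalize hm : (max l1 l2) ^ 2 = m2 at hP ⊢
  omega
end

section
/- For every c ∈ F, every v ∈ F, and every y ∈ Y, the set of pairs (u, x) ∈ F × X such that the oriented edge (v, vy) lies on the Y-geodesic from uc to uxc or the oriented edge (vy, v) lies on the Y-geodesic from uc to uxc, is finite of cardinality at most n · L_{YX}(c). -/
namespace CardPreimageAux
open FreeGroup

variable {ι : Type*} [DecidableEq ι]

/-- letter as a group element -/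
def lett (ℓ : ι × Bool) : FreeGroup ι := cond ℓ.2 (of ℓ.1) (of ℓ.1)⁻¹

lemma mk_singleton (ℓ : ι × Bool) : mk [ℓ] = lett ℓ := by
  obtain ⟨a, b⟩ := ℓ
  cases b
  · show mk [(a, false)] = (of a)⁻¹
    rw [show (of a : FreeGroup ι) = mk [(a, true)] from rfl, inv_mk]
    simp [invRev]
  · rfl

lemma mk_eq_prod (L : List (ι × Bool)) : mk L = (L.map lett).prod := by
  induction L with
  | nil => simp [← one_eq_mk]
  | cons hd tl ih =>
    rw [List.map_cons, List.prod_cons, ← mk_singleton, ← ih, mul_mk]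
    rfl

lemma norm_lett (ℓ : ι × Bool) : norm (lett ℓ) = 1 := by
  obtain ⟨a, b⟩ := ℓ; cases b <;> simp [lett, norm_of]

lemma norm_list_prod_le (L : List (FreeGroup ι)) (h : ∀ x ∈ L, norm x ≤ 1) :
    norm L.prod ≤ L.length := by
  induction L with
  | nil => simp [FreeGroup.norm_one]
  | cons hd tl ih =>
    rw [List.prod_cons]
    calc norm (hd * tl.prod) ≤ norm hd + norm tl.prod := norm_mul_le _ _
    _ ≤ 1 + tl.length := by
        gcongr
        · exact h hd (by simp)
        · exact ih fun x hx => h x (by simp [hx])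
    _ = (hd :: tl).length := by simp [Nat.add_comm]

lemma toWord_mul_eq_append {a b : FreeGroup ι} (h : norm a + norm b = norm (a * b)) :
    (a * b).toWord = a.toWord ++ b.toWord :=
  (toWord_mul_sublist a b).eq_of_length (by
    simpa [FreeGroup.norm, List.length_append] using h.symm)

lemma geodesic_prefix {σ ω : FreeGroup ι} {ℓ : ι × Bool}
    (h : norm σ + 1 + norm ((mk [ℓ])⁻¹ * (σ⁻¹ * ω)) = norm ω) :
    σ = mk (ω.toWord.take (norm σ)) ∧ ω.toWord[norm σ]? = some ℓ ∧ norm σ < norm ω := by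
  set μ : FreeGroup ι := mk [ℓ] with hμdef
  have hμw : μ.toWord = [ℓ] := by rw [hμdef, toWord_mk, reduce_singleton]
  have hμ : norm μ = 1 := by rw [FreeGroup.norm, hμw]; rfl
  set t : FreeGroup ι := σ⁻¹ * ω with ht
  have htt : μ * (μ⁻¹ * t) = t := by group
  have h1 : norm t ≤ 1 + norm (μ⁻¹ * t) := by
    calc norm t = norm (μ * (μ⁻¹ * t)) := by rw [htt]
    _ ≤ norm μ + norm (μ⁻¹ * t) := norm_mul_le _ _
    _ = 1 + norm (μ⁻¹ * t) := by rw [hμ]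
  have hst : σ * t = ω := by rw [ht]; group
  have h2 : norm ω ≤ norm σ + norm t := by
    calc norm ω = norm (σ * t) := by rw [hst]
    _ ≤ _ := norm_mul_le _ _
  have e1 : norm μ + norm (μ⁻¹ * t) = norm t := by omega
  have e2 : norm σ + norm t = norm ω := by omega
  have hw1 : t.toWord = ℓ :: (μ⁻¹ * t).toWord := by
    have := toWord_mul_eq_append (a := μ) (b := μ⁻¹ * t) (by rw [htt]; exact e1)
    rw [htt, hμw] at this
    simpa using this
  have hw2 : ω.toWord = σ.toWord ++ t.toWord := by
    have := toWord_mul_eq_append (a := σ) (b := t) (by rw [hst]; exact e2)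
    rwa [hst] at this
  have hns : norm σ = σ.toWord.length := rfl
  refine ⟨?_, ?_, ?_⟩
  · rw [hw2, hns, List.take_left, mk_toWord]
  · rw [hw2, hw1, hns, List.getElem?_append_right (Nat.le_refl _)]
    simp
  · have : 0 < t.norm := by rw [show t.norm = t.toWord.length from rfl, hw1]; simp
    omega

lemma wordLength_eq_norm {F : Type*} [Group F] (Y : ι → F) (e : FreeGroup ι ≃* F)
    (he : ∀ i, e (of i) = Y i) (g : F) :
    wordLength (Set.range Y) g = norm (e.symm g) := by
  have hmem : (e.symm g).toWord.length ∈
      {m : ℕ | ∃ f : Fin m → F, (∀ i, f i ∈ Set.range Y ∨ (f i)⁻¹ ∈ Set.range Y) ∧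
        g = (List.ofFn f).prod} := by
    refine ⟨fun i => e (lett ((e.symm g).toWord.get i)), fun i => ?_, ?_⟩
    · dsimp only
      rcases hb : ((e.symm g).toWord.get i).2 with _ | _
      · right
        have : lett ((e.symm g).toWord.get i) = (of ((e.symm g).toWord.get i).1)⁻¹ := by
          rw [lett, hb]; rfl
        rw [this, _root_.map_inv, inv_inv, he]
        exact Set.mem_range_self _
      · left
        have : lett ((e.symm g).toWord.get i) = of ((e.symm g).toWord.get i).1 := by
          rw [lett, hb]; rfl
        rw [this, he]
        exact Set.mem_range_self _
    · have h1 : List.ofFn (fun i => e (lett ((e.symm g).toWord.get i)))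
          = (e.symm g).toWord.map (⇑e ∘ lett) := by
        rw [show (fun i => e (lett ((e.symm g).toWord.get i)))
            = (⇑e ∘ lett) ∘ (e.symm g).toWord.get from rfl, ← List.map_ofFn, List.ofFn_get]
      rw [h1, ← List.map_map, ← map_list_prod, ← mk_eq_prod, mk_toWord,
        MulEquiv.apply_symm_apply]
  refine le_antisymm (Nat.sInf_le hmem) (le_csInf ⟨_, hmem⟩ ?_)
  rintro m ⟨f, hf, rfl⟩
  have : e.symm (List.ofFn f).prod = ((List.ofFn f).map ⇑e.symm).prod :=
    map_list_prod (e.symm : F →* FreeGroup ι) _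
  rw [this]
  calc norm ((List.ofFn f).map ⇑e.symm).prod ≤ ((List.ofFn f).map ⇑e.symm).length := by
        refine norm_list_prod_le _ ?_
        intro x hx
        rw [List.mem_map] at hx
        obtain ⟨z, hz, rfl⟩ := hx
        rw [List.mem_ofFn] at hz
        obtain ⟨i, rfl⟩ := hz
        rcases hf i with ⟨a, ha⟩ | ⟨a, ha⟩
        · have : f i = e (of a) := by rw [he]; exact ha.symm
          rw [this, MulEquiv.symm_apply_apply, norm_of]
        · have : f i = (e (of a))⁻¹ := by rw [he, ha]; group
          rw [this, _root_.map_inv, MulEquiv.symm_apply_apply, norm_inv_eq, norm_of]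
  _ = m := by simp

end CardPreimageAux

open CardPreimageAux

/-- A point interior to an edge of the target has at most `rk(F)⋅ℓ(f)` preimages under the
morphism determined on vertices by `u ↦ u⋅c`: the set of edges `(u, u⋅x)` of the source
Cayley tree whose image geodesic traverses the edge `{v, v⋅y}` has at most
`n ⋅ L_{YX}(c)` elements. -/
theorem card_preimage_edges_le {F : Type*} [Group F] {n : ℕ} (hn : 2 ≤ n)
    (X Y : Fin n → F) (hX : IsFreeBasis X) (hY : IsFreeBasis Y)
    (c v : F) (y : F) (hy : y ∈ Set.range Y) :
    {p : F × Fin n |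
        liesOnGeodesic (Set.range Y) v y (p.1 * c) (p.1 * X p.2 * c) ∨
        liesOnGeodesic (Set.range Y) (v * y) y⁻¹ (p.1 * c) (p.1 * X p.2 * c)}.Finite ∧
      {p : F × Fin n |
        liesOnGeodesic (Set.range Y) v y (p.1 * c) (p.1 * X p.2 * c) ∨
        liesOnGeodesic (Set.range Y) (v * y) y⁻¹ (p.1 * c) (p.1 * X p.2 * c)}.ncard ≤
      n * morphismLength X Y c := by
  classical
  obtain ⟨a, rfl⟩ := hy
  set e : FreeGroup (Fin n) ≃* F := MulEquiv.ofBijective _ hY with hedef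
  have he : ∀ i, e (FreeGroup.of i) = Y i := fun i => by
    show FreeGroup.lift Y (FreeGroup.of i) = Y i
    simp
  have hwl : ∀ g, wordLength (Set.range Y) g = FreeGroup.norm (e.symm g) :=
    wordLength_eq_norm Y e he
  set W : Fin n → FreeGroup (Fin n) := fun i => e.symm (c⁻¹ * X i * c) with hWdef
  have hWle : ∀ i, FreeGroup.norm (W i) ≤ morphismLength X Y c := fun i =>
    calc FreeGroup.norm (W i) = wordLength (Set.range Y) (c⁻¹ * X i * c) := (hwl _).symm
    _ ≤ _ := by
      exact Finset.le_sup (f := fun i => wordLength (Set.range Y) (c⁻¹ * X i * c))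
        (Finset.mem_univ i)
  have hYt : e (FreeGroup.mk [(a, true)]) = Y a := by
    rw [mk_singleton]; exact he a
  have hYf : e (FreeGroup.mk [(a, false)]) = (Y a)⁻¹ := by
    rw [mk_singleton, show (lett (a, false) : FreeGroup (Fin n)) = (FreeGroup.of a)⁻¹ from rfl,
      _root_.map_inv, he]
  -- main translation lemma
  have main : ∀ (u z : F) (i : Fin n) (ℓ : Fin n × Bool),
      wordLength (Set.range Y) ((u * c)⁻¹ * z) + 1 +
        wordLength (Set.range Y) ((z * e (FreeGroup.mk [ℓ]))⁻¹ * (u * X i * c)) =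
        wordLength (Set.range Y) ((u * c)⁻¹ * (u * X i * c)) →
      (W i).toWord[wordLength (Set.range Y) ((u * c)⁻¹ * z)]? = some ℓ ∧
        u = z * (e (FreeGroup.mk
            ((W i).toWord.take (wordLength (Set.range Y) ((u * c)⁻¹ * z)))))⁻¹ * c⁻¹ ∧
        wordLength (Set.range Y) ((u * c)⁻¹ * z) < FreeGroup.norm (W i) := by
    intro u z i ℓ h
    simp only [hwl] at h ⊢
    have h3 : e.symm ((u * c)⁻¹ * (u * X i * c)) = W i := by
      rw [show (u * c)⁻¹ * (u * X i * c) = c⁻¹ * X i * c by group, hWdef]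
    have h2 : e.symm ((z * e (FreeGroup.mk [ℓ]))⁻¹ * (u * X i * c)) =
        (FreeGroup.mk [ℓ])⁻¹ * ((e.symm ((u * c)⁻¹ * z))⁻¹ * W i) := by
      rw [MulEquiv.symm_apply_eq, map_mul, map_mul, _root_.map_inv, _root_.map_inv,
        MulEquiv.apply_symm_apply, hWdef, MulEquiv.apply_symm_apply]
      group
    rw [h2, h3] at h
    obtain ⟨hpre, hget, hlt⟩ := geodesic_prefix h
    refine ⟨hget, ?_, hlt⟩
    have hE : (u * c)⁻¹ * z =
        e (FreeGroup.mk ((W i).toWord.take (FreeGroup.norm (e.symm ((u * c)⁻¹ * z))))) := by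
      conv_lhs => rw [← MulEquiv.apply_symm_apply e ((u * c)⁻¹ * z)]
      rw [← hpre]
    rw [← hE]
    group
  -- the two orientation conditions
  set T : Set (F × Fin n) := {p : F × Fin n |
      liesOnGeodesic (Set.range Y) v (Y a) (p.1 * c) (p.1 * X p.2 * c) ∨
      liesOnGeodesic (Set.range Y) (v * Y a) (Y a)⁻¹ (p.1 * c) (p.1 * X p.2 * c)} with hT
  set L := morphismLength X Y c with hL
  set g : F × Fin n → Fin n × ℕ := fun p =>
    (p.2, if liesOnGeodesic (Set.range Y) v (Y a) (p.1 * c) (p.1 * X p.2 * c) then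
        wordLength (Set.range Y) ((p.1 * c)⁻¹ * v)
      else wordLength (Set.range Y) ((p.1 * c)⁻¹ * (v * Y a))) with hg
  have spec : ∀ p ∈ T,
      (W p.2).toWord[(g p).2]? = some (a,
          if liesOnGeodesic (Set.range Y) v (Y a) (p.1 * c) (p.1 * X p.2 * c) then true
          else false) ∧
        p.1 = (if liesOnGeodesic (Set.range Y) v (Y a) (p.1 * c) (p.1 * X p.2 * c) then v
            else v * Y a) * (e (FreeGroup.mk ((W p.2).toWord.take (g p).2)))⁻¹ * c⁻¹ ∧
        (g p).2 < FreeGroup.norm (W p.2) := by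
    intro p hp
    by_cases h1 : liesOnGeodesic (Set.range Y) v (Y a) (p.1 * c) (p.1 * X p.2 * c)
    · simp only [hg, if_pos h1]
      exact main p.1 v p.2 (a, true) (by rw [hYt]; exact h1)
    · have h2 := hp.resolve_left h1
      simp only [hg, if_neg h1]
      refine main p.1 (v * Y a) p.2 (a, false) ?_
      rw [hYf]
      exact h2
  have hinj : Set.InjOn g T := by
    intro p hp q hq hpq
    obtain ⟨hp1, hp2, -⟩ := spec p hp
    obtain ⟨hq1, hq2, -⟩ := spec q hq
    have hi : p.2 = q.2 := congrArg Prod.fst hpq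
    have hk : (g p).2 = (g q).2 := congrArg Prod.snd hpq
    by_cases c1 : liesOnGeodesic (Set.range Y) v (Y a) (p.1 * c) (p.1 * X p.2 * c) <;>
      by_cases c2 : liesOnGeodesic (Set.range Y) v (Y a) (q.1 * c) (q.1 * X q.2 * c)
    · rw [if_pos c1] at hp2
      rw [if_pos c2] at hq2
      refine Prod.ext ?_ hi
      rw [hp2, hq2, hi, hk]
    · rw [if_pos c1] at hp1
      rw [if_neg c2] at hq1
      rw [hk, hi, hq1] at hp1
      simp at hp1
    · rw [if_neg c1] at hp1
      rw [if_pos c2] at hq1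
      rw [hk, hi, hq1] at hp1
      simp at hp1
    · rw [if_neg c1] at hp2
      rw [if_neg c2] at hq2
      refine Prod.ext ?_ hi
      rw [hp2, hq2, hi, hk]
  have himg : g '' T ⊆ ↑((Finset.univ : Finset (Fin n)) ×ˢ Finset.range L) := by
    rintro q ⟨p, hp, rfl⟩
    obtain ⟨-, -, hlt⟩ := spec p hp
    simp only [Finset.coe_product, Set.mem_prod, Finset.mem_coe, Finset.mem_univ,
      Finset.mem_range, true_and]
    exact lt_of_lt_of_le hlt (hWle p.2)
  have hfin : T.Finite := Set.Finite.of_finite_image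
    (Set.Finite.subset (Finset.finite_toSet _) himg) hinj
  refine ⟨hfin, ?_⟩
  calc T.ncard = (g '' T).ncard := (Set.ncard_image_of_injOn hinj).symm
  _ ≤ (↑((Finset.univ : Finset (Fin n)) ×ˢ Finset.range L) : Set (Fin n × ℕ)).ncard :=
      Set.ncard_le_ncard himg (Finset.finite_toSet _)
  _ = n * L := by
      rw [Set.ncard_coe_finset, Finset.card_product, Finset.card_univ, Finset.card_range,
        Fintype.card_fin]
end
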